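/- Let L/K be a cyclic Galois extension of degree r with Galois group ⟨σ⟩ and c ∈ K^×. The cyclic algebra (L/K, σ, c) is isomorphic to the matrix algebra M_r(K) if and only if c is a norm from L, i.e., c ∈ N_{L/K}(L^×). -/
import Mathlib

open Finset Module

section helpers

variable {K L : Type} [Field K] [Field L] [Algebra K L]

lemma CAhelper.prod_shift (σ : L ≃ₐ[K] L) {r : ℕ} (hσr : σ ^ r = 1) (hr1 : 0 < r) (x : L) :
    ∏ i ∈ Finset.range r, (σ ^ (i + 1)) x = ∏ i ∈ Finset.range r, (σ ^ i) x := by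
  obtain ⟨s, rfl⟩ : ∃ s, r = s + 1 := ⟨r - 1, (Nat.succ_pred_eq_of_pos hr1).symm⟩
  rw [Finset.prod_range_succ, Finset.prod_range_succ', hσr, pow_zero]

lemma CAhelper.prod_inv_eq (σ : L ≃ₐ[K] L) {r : ℕ} (hσr : σ ^ r = 1) (hr1 : 0 < r) (x : L) :
    ∏ i ∈ Finset.range r, ((σ⁻¹) ^ i) x = ∏ i ∈ Finset.range r, (σ ^ i) x := by
  have h1 : ∀ i ∈ Finset.range r, ((σ⁻¹) ^ i) x = (σ ^ (r - i)) x := by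
    intro i hi
    have hi' : i ≤ r := le_of_lt (Finset.mem_range.mp hi)
    have hmul : σ ^ (r - i) * σ ^ i = 1 := by rw [← pow_add, Nat.sub_add_cancel hi', hσr]
    rw [inv_pow, inv_eq_of_mul_eq_one_left hmul]
  calc ∏ i ∈ Finset.range r, ((σ⁻¹) ^ i) x
      = ∏ i ∈ Finset.range r, (σ ^ (r - i)) x := Finset.prod_congr rfl h1
    _ = ∏ i ∈ Finset.range r, (σ ^ (i + 1)) x := by
        rw [← Finset.prod_range_reflect (fun j => (σ ^ (j + 1)) x) r]
        refine Finset.prod_congr rfl fun j hj => ?_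
        have hj' : j < r := Finset.mem_range.mp hj
        have : r - j = r - 1 - j + 1 := by omega
        rw [this]
    _ = ∏ i ∈ Finset.range r, (σ ^ i) x := CAhelper.prod_shift σ hσr hr1 x

end helpers

set_option maxHeartbeats 1000000 in
/-- Let `L/K` be cyclic Galois of degree `r` with Galois group `⟨σ⟩` and
`c ∈ K^×`. The cyclic algebra `(L/K, σ, c)` — a `K`-algebra `A` containing `L` via
`m : L →ₐ[K] A`, with an element `ξ` satisfying `m(λ)ξ = ξm(σλ)` and `ξ^r = m(c)`, free as a
left `L`-space on `1, ξ, …, ξ^{r-1}` — is isomorphic to `M_r(K)` iff `c` is a norm from `L`,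
i.e. `c = N_{L/K}(μ) = σ^{r-1}(μ)⋯σ(μ)·μ` for some `μ ∈ L^×`. -/
theorem cyclicAlgebra_iso_matrix_iff_isNorm
    {K L : Type} [Field K] [Field L] [Algebra K L] [IsGalois K L]
    [FiniteDimensional K L]
    (r : ℕ) (σ : L ≃ₐ[K] L) (hσord : orderOf σ = r)
    (hσgen : ∀ g : L ≃ₐ[K] L, g ∈ Subgroup.zpowers σ)
    (hr : Module.finrank K L = r)
    (c : K) (hc : c ≠ 0)
    {A : Type} [Ring A] [Algebra K A]
    (m : L →ₐ[K] A) (ξ : A)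
    (hmξ : ∀ lam : L, m lam * ξ = ξ * m (σ lam))
    (hξr : ξ ^ r = m (algebraMap K L c))
    (hbasis : Function.Bijective
      (fun f : Fin r → L => ∑ i : Fin r, m (f i) * ξ ^ (i : ℕ))) :
    Nonempty (A ≃ₐ[K] Matrix (Fin r) (Fin r) K) ↔
      ∃ μ : Lˣ, algebraMap K L c = ∏ i ∈ Finset.range r, (σ ^ i) (μ : L) := by
  classical
  have hr1 : 0 < r := hr ▸ Module.finrank_pos
  have hσr : σ ^ r = 1 := by rw [← hσord]; exact pow_orderOf_eq_one σ
  have hσir : (σ⁻¹ : L ≃ₐ[K] L) ^ r = 1 := by rw [inv_pow, hσr, inv_one]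
  set cl : L := algebraMap K L c with hcl
  have hcl0 : cl ≠ 0 := fun h => hc ((algebraMap K L).injective (by rw [← hcl, h, map_zero]))
  have hfix : ∀ n : ℕ, ((σ⁻¹ : L ≃ₐ[K] L) ^ n) cl = cl := fun n => by
    rw [hcl]; exact AlgEquiv.commutes _ c
  have hστ : ∀ x : L, σ (σ⁻¹ x) = x := fun x => by
    rw [show (σ⁻¹ : L ≃ₐ[K] L) = σ.symm from rfl]; exact σ.apply_symm_apply x
  -- ξ commutation
  have hmov : ∀ ν : L, ξ * m ν = m (σ⁻¹ ν) * ξ := by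
    intro ν
    have h := hmξ (σ⁻¹ ν)
    rw [hστ] at h
    exact h.symm
  have hxipow : ∀ (n : ℕ) (ν : L), ξ ^ n * m ν = m (((σ⁻¹ : L ≃ₐ[K] L) ^ n) ν) * ξ ^ n := by
    intro n ν
    induction n with
    | zero => simp
    | succ n ih =>
      rw [pow_succ', mul_assoc, ih, ← mul_assoc, hmov, mul_assoc, ← pow_succ']
      congr 2
      rw [pow_succ']
      rfl
  -- the basis linear equivalence
  let B : (Fin r → L) →ₗ[K] A :=
    { toFun := fun f => ∑ i : Fin r, m (f i) * ξ ^ (i : ℕ)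
      map_add' := by
        intro f g
        simp [add_mul, Finset.sum_add_distrib]
      map_smul' := by
        intro k f
        simp [Finset.smul_sum, smul_mul_assoc] }
  let G : (Fin r → L) ≃ₗ[K] A := LinearEquiv.ofBijective B hbasis
  haveI : FiniteDimensional K A := Module.Finite.equiv G
  have hfinA : finrank K A = r * r := by
    rw [← G.finrank_eq, Module.finrank_pi_fintype]
    simp [hr, Finset.card_univ, mul_comm]
  constructor
  · rintro ⟨ψ⟩
    -- forward direction
    let Φ : A ≃ₐ[K] Module.End K (Fin r → K) := ψ.trans algEquivMatrix'.symm
    let v0 : Fin r → K := fun _ => 1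
    have hv0 : v0 ≠ 0 := by
      intro h
      have h0 := congrFun h (⟨0, hr1⟩ : Fin r)
      simp [v0] at h0
    let e : L →ₗ[K] (Fin r → K) :=
      { toFun := fun l => Φ (m l) v0
        map_add' := by intro x y; simp
        map_smul' := by intro k x; simp }
    have he : ∀ l y : L, Φ (m (l * y)) v0 = Φ (m l) (Φ (m y) v0) := by
      intro l y
      rw [map_mul, map_mul, Module.End.mul_apply]
    have heinj : Function.Injective e := by
      intro x y hxy
      by_contra hne
      have hsub : x - y ≠ 0 := sub_ne_zero.mpr fun h => hne h
      have h0 : Φ (m (x - y)) v0 = 0 := by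
        show e (x - y) = _
        rw [map_sub, hxy, sub_self]
      have hv : v0 = 0 := by
        have h1 := he (x - y)⁻¹ (x - y)
        rw [inv_mul_cancel₀ hsub, map_one, map_one, Module.End.one_apply, h0, map_zero] at h1
        exact h1
      exact hv0 hv
    have hVrank : finrank K L = finrank K (Fin r → K) := by
      rw [hr, Module.finrank_fintype_fun_eq_card, Fintype.card_fin]
    let E : L ≃ₗ[K] (Fin r → K) := LinearMap.linearEquivOfInjective e heinj hVrank
    have hE : ∀ x : L, E x = Φ (m x) v0 := fun x =>
      LinearMap.linearEquivOfInjective_apply heinj hVrank x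
    have hEmul : ∀ l y : L, E (l * y) = Φ (m l) (E y) := by
      intro l y; rw [hE, hE, he]
    have hEsymm : ∀ (l : L) (w : Fin r → K), E.symm (Φ (m l) w) = l * E.symm w := by
      intro l w
      have h1 := hEmul l (E.symm w)
      rw [E.apply_symm_apply] at h1
      rw [← h1, E.symm_apply_apply]
    set T : L → L := fun y => E.symm (Φ ξ (E y)) with hT
    have hTσ : ∀ l x : L, T (σ l * x) = l * T x := by
      intro l x
      show E.symm (Φ ξ (E (σ l * x))) = l * E.symm (Φ ξ (E x))
      rw [hEmul, ← Module.End.mul_apply, ← map_mul, ← hmξ, map_mul, Module.End.mul_apply, hEsymm]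
    set a : L := T 1 with ha
    have hTval : ∀ y : L, T y = σ⁻¹ y * a := by
      intro y
      have h1 := hTσ (σ⁻¹ y) 1
      rw [hστ, mul_one] at h1
      exact h1
    have hiter : ∀ (n : ℕ) (y : L),
        E.symm ((Φ ξ ^ n) (E y)) = (((σ⁻¹ : L ≃ₐ[K] L) ^ n) y) *
          ∏ i ∈ Finset.range n, (((σ⁻¹ : L ≃ₐ[K] L)) ^ i) a := by
      intro n y
      induction n with
      | zero => simp
      | succ n ih =>
        rw [pow_succ', Module.End.mul_apply]
        have h2 : Φ ξ ((Φ ξ ^ n) (E y)) = Φ ξ (E (E.symm ((Φ ξ ^ n) (E y)))) := by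
          rw [E.apply_symm_apply]
        rw [h2]
        have h3 : E.symm (Φ ξ (E (E.symm ((Φ ξ ^ n) (E y))))) = T (E.symm ((Φ ξ ^ n) (E y))) := rfl
        rw [h3, ih, hTval, map_mul, map_prod, Finset.prod_range_succ']
        have h4 : ∀ (k : ℕ) (z : L), σ⁻¹ (((σ⁻¹ : L ≃ₐ[K] L) ^ k) z) = ((σ⁻¹ : L ≃ₐ[K] L) ^ (k + 1)) z := by
          intro k z; rw [pow_succ']; rfl
        rw [h4 n, mul_assoc]
        congr 1
        congr 1
        refine Finset.prod_congr rfl fun i _ => h4 i _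
    have hres : cl = ∏ i ∈ Finset.range r, (((σ⁻¹ : L ≃ₐ[K] L)) ^ i) a := by
      have h1 : (Φ ξ) ^ r = Φ (m cl) := by rw [← map_pow, hξr]
      have h2 := hiter r 1
      rw [h1, hEsymm, E.symm_apply_apply, mul_one, map_one, one_mul] at h2
      exact h2
    have ha0 : a ≠ 0 := by
      intro h
      apply hcl0
      rw [hres]
      exact Finset.prod_eq_zero (Finset.mem_range.mpr hr1) (by rw [h, map_zero])
    refine ⟨Units.mk0 a ha0, ?_⟩
    simp only [Units.val_mk0]
    rw [hres]
    exact CAhelper.prod_inv_eq σ hσr hr1 a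

  · rintro ⟨μ, hμ⟩
    -- backward direction
    let lm : L →ₐ[K] Module.End K L := Algebra.lmul K L
    have hlm : ∀ x y : L, lm x y = x * y := fun _ _ => rfl
    let T : Module.End K L :=
      { toFun := fun y => σ⁻¹ y * (μ : L)
        map_add' := by intro x y; simp [map_add, add_mul]
        map_smul' := by intro k x; simp [map_smul, smul_mul_assoc] }
    have hTapp : ∀ y : L, T y = σ⁻¹ y * (μ : L) := fun _ => rfl
    have hTlm : ∀ ν : L, T * lm ν = lm (σ⁻¹ ν) * T := by
      intro ν
      apply LinearMap.ext; intro y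
      rw [Module.End.mul_apply, Module.End.mul_apply, hlm, hTapp, hTapp, hlm, map_mul, mul_assoc]
    have hTpow : ∀ (n : ℕ) (ν : L), T ^ n * lm ν = lm (((σ⁻¹ : L ≃ₐ[K] L) ^ n) ν) * T ^ n := by
      intro n ν
      induction n with
      | zero => simp
      | succ n ih =>
        rw [pow_succ', mul_assoc, ih, ← mul_assoc, hTlm, mul_assoc, ← pow_succ']
        congr 2
        rw [pow_succ']
        rfl
    have hTn : ∀ (n : ℕ) (y : L),
        (T ^ n) y = (((σ⁻¹ : L ≃ₐ[K] L) ^ n) y) * ∏ i ∈ Finset.range n, ((σ⁻¹ : L ≃ₐ[K] L) ^ i) (μ : L) := by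
      intro n y
      induction n with
      | zero => simp
      | succ n ih =>
        rw [pow_succ', Module.End.mul_apply, ih, hTapp, map_mul, map_prod, Finset.prod_range_succ']
        have h4 : ∀ (k : ℕ) (z : L), σ⁻¹ (((σ⁻¹ : L ≃ₐ[K] L) ^ k) z) = ((σ⁻¹ : L ≃ₐ[K] L) ^ (k + 1)) z := by
          intro k z; rw [pow_succ']; rfl
        rw [h4 n, mul_assoc]
        congr 1
        congr 1
        refine Finset.prod_congr rfl fun i _ => h4 i _
    have hTr : T ^ r = lm cl := by
      apply LinearMap.ext; intro y
      rw [hTn, hσir, AlgEquiv.one_apply, hlm,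
        CAhelper.prod_inv_eq σ hσr hr1 ((μ : L)), ← hμ, mul_comm]
    -- the algebra morphism
    let ρ : (Fin r → L) →ₗ[K] Module.End K L :=
      { toFun := fun f => ∑ i : Fin r, lm (f i) * T ^ (i : ℕ)
        map_add' := by intro f g; simp [add_mul, Finset.sum_add_distrib]
        map_smul' := by intro k f; simp [Finset.smul_sum, smul_mul_assoc] }
    let φ : A →ₗ[K] Module.End K L := ρ ∘ₗ (G.symm : A →ₗ[K] (Fin r → L))
    have hGf : ∀ f : Fin r → L, G f = ∑ i : Fin r, m (f i) * ξ ^ (i : ℕ) := fun f => rfl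
    have hφB : ∀ f : Fin r → L,
        φ (∑ i : Fin r, m (f i) * ξ ^ (i : ℕ)) = ∑ i : Fin r, lm (f i) * T ^ (i : ℕ) := by
      intro f
      have h1 : (∑ i : Fin r, m (f i) * ξ ^ (i : ℕ)) = G f := rfl
      show ρ (G.symm (∑ i : Fin r, m (f i) * ξ ^ (i : ℕ))) = _
      rw [h1, G.symm_apply_apply]
      rfl
    have hsingleM : ∀ (j : Fin r) (w : L),
        (∑ i : Fin r, m ((Pi.single j w : Fin r → L) i) * ξ ^ (i : ℕ)) = m w * ξ ^ (j : ℕ) := by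
      intro j w
      rw [Fintype.sum_eq_single j]
      · rw [Pi.single_eq_same]
      · intro i hij
        rw [Pi.single_eq_of_ne hij, map_zero, zero_mul]
    have hsingleT : ∀ (j : Fin r) (w : L),
        (∑ i : Fin r, lm ((Pi.single j w : Fin r → L) i) * T ^ (i : ℕ)) = lm w * T ^ (j : ℕ) := by
      intro j w
      rw [Fintype.sum_eq_single j]
      · rw [Pi.single_eq_same]
      · intro i hij
        rw [Pi.single_eq_of_ne hij, map_zero, zero_mul]
    have key1 : ∀ (n : ℕ) (w : L), φ (m w * ξ ^ n) = lm w * T ^ n := by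
      intro n
      induction n using Nat.strong_induction_on with
      | _ n ihn =>
        by_cases h : n < r
        · intro w
          have h1 := (hsingleM ⟨n, h⟩ w).symm
          rw [h1, hφB, hsingleT]
        · intro w
          push_neg at h
          obtain ⟨k, rfl⟩ : ∃ k, n = k + r := ⟨n - r, by omega⟩
          have hk : k < k + r := by omega
          have hξk : m w * ξ ^ (k + r) = m (w * cl) * ξ ^ k := by
            rw [pow_add, hξr, hxipow k cl, hfix k, ← mul_assoc, ← map_mul]
          have hTk : lm w * T ^ (k + r) = lm (w * cl) * T ^ k := by
            rw [pow_add, hTr, hTpow k cl, hfix k, ← mul_assoc, ← map_mul]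
          rw [hξk, hTk]
          exact ihn k hk (w * cl)
    have hmulMM : ∀ (li lj : L) (i j : ℕ),
        (m li * ξ ^ i) * (m lj * ξ ^ j) = m (li * ((σ⁻¹ : L ≃ₐ[K] L) ^ i) lj) * ξ ^ (i + j) := by
      intro li lj i j
      calc (m li * ξ ^ i) * (m lj * ξ ^ j) = m li * ((ξ ^ i * m lj) * ξ ^ j) := by
            rw [mul_assoc, mul_assoc]
        _ = m li * ((m (((σ⁻¹ : L ≃ₐ[K] L) ^ i) lj) * ξ ^ i) * ξ ^ j) := by rw [hxipow]
        _ = (m li * m (((σ⁻¹ : L ≃ₐ[K] L) ^ i) lj)) * (ξ ^ i * ξ ^ j) := by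
            rw [mul_assoc, mul_assoc]
        _ = m (li * ((σ⁻¹ : L ≃ₐ[K] L) ^ i) lj) * ξ ^ (i + j) := by rw [← map_mul, pow_add]
    have hmulNN : ∀ (li lj : L) (i j : ℕ),
        (lm li * T ^ i) * (lm lj * T ^ j) = lm (li * ((σ⁻¹ : L ≃ₐ[K] L) ^ i) lj) * T ^ (i + j) := by
      intro li lj i j
      calc (lm li * T ^ i) * (lm lj * T ^ j) = lm li * ((T ^ i * lm lj) * T ^ j) := by
            rw [mul_assoc, mul_assoc]
        _ = lm li * ((lm (((σ⁻¹ : L ≃ₐ[K] L) ^ i) lj) * T ^ i) * T ^ j) := by rw [hTpow]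
        _ = (lm li * lm (((σ⁻¹ : L ≃ₐ[K] L) ^ i) lj)) * (T ^ i * T ^ j) := by
            rw [mul_assoc, mul_assoc]
        _ = lm (li * ((σ⁻¹ : L ≃ₐ[K] L) ^ i) lj) * T ^ (i + j) := by rw [← map_mul, pow_add]
    have hφmul : ∀ x y : A, φ (x * y) = φ x * φ y := by
      intro x y
      obtain ⟨f, rfl⟩ : ∃ f, G f = x := ⟨G.symm x, G.apply_symm_apply x⟩
      obtain ⟨g, rfl⟩ : ∃ g, G g = y := ⟨G.symm y, G.apply_symm_apply y⟩
      calc φ (G f * G g)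
          = φ (∑ i : Fin r, ∑ j : Fin r,
              m (f i * ((σ⁻¹ : L ≃ₐ[K] L) ^ (i : ℕ)) (g j)) * ξ ^ ((i : ℕ) + (j : ℕ))) := by
            rw [hGf f, hGf g, Finset.sum_mul_sum]
            congr 1
            refine Finset.sum_congr rfl fun i _ => ?_
            refine Finset.sum_congr rfl fun j _ => ?_
            exact hmulMM (f i) (g j) (i : ℕ) (j : ℕ)
        _ = ∑ i : Fin r, ∑ j : Fin r,
              lm (f i * ((σ⁻¹ : L ≃ₐ[K] L) ^ (i : ℕ)) (g j)) * T ^ ((i : ℕ) + (j : ℕ)) := by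
            rw [map_sum]
            refine Finset.sum_congr rfl fun i _ => ?_
            rw [map_sum]
            exact Finset.sum_congr rfl fun j _ => key1 _ _
        _ = (∑ i : Fin r, lm (f i) * T ^ (i : ℕ)) * (∑ j : Fin r, lm (g j) * T ^ (j : ℕ)) := by
            rw [Finset.sum_mul_sum]
            refine Finset.sum_congr rfl fun i _ => ?_
            exact Finset.sum_congr rfl fun j _ => (hmulNN (f i) (g j) (i : ℕ) (j : ℕ)).symm
        _ = φ (G f) * φ (G g) := by
            rw [hGf f, hGf g, hφB f, hφB g]
    have hφ1 : φ 1 = 1 := by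
      have h := key1 0 1
      rw [pow_zero, pow_zero, mul_one, mul_one] at h
      rw [show m (1 : L) = 1 from map_one m, show lm (1 : L) = 1 from map_one lm] at h
      exact h
    let φA : A →ₐ[K] Module.End K L := AlgHom.ofLinearMap φ hφ1 hφmul
    -- injectivity via Dedekind's independence of characters
    have horderinv : orderOf (σ⁻¹ : L ≃ₐ[K] L) = r := by rw [orderOf_inv, hσord]
    let χ : Fin r → (L →* L) := fun i =>
      (((σ⁻¹ : L ≃ₐ[K] L) ^ (i : ℕ)).toAlgHom : L →ₐ[K] L).toRingHom.toMonoidHom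
    have hχcoe : ∀ i : Fin r, ⇑(χ i) = ⇑((σ⁻¹ : L ≃ₐ[K] L) ^ (i : ℕ)) := fun i => rfl
    have hχinj : Function.Injective χ := by
      intro i j hij
      have h1 : ((σ⁻¹ : L ≃ₐ[K] L) ^ (i : ℕ)) = ((σ⁻¹ : L ≃ₐ[K] L) ^ (j : ℕ)) := by
        apply AlgEquiv.ext
        intro x
        have := congrArg (fun (f : L →* L) => f x) hij
        simpa [hχcoe] using this
      have h2 : (i : ℕ) = (j : ℕ) := by
        refine pow_injOn_Iio_orderOf ?_ ?_ h1
        · rw [horderinv]; exact i.isLt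
        · rw [horderinv]; exact j.isLt
      exact Fin.ext h2
    have hli : LinearIndependent L (fun i : Fin r => (⇑((σ⁻¹ : L ≃ₐ[K] L) ^ (i : ℕ)) : L → L)) := by
      have h0 := linearIndependent_monoidHom L L
      exact h0.comp χ hχinj
    have hρinj : ∀ f : Fin r → L, (∑ i : Fin r, lm (f i) * T ^ (i : ℕ)) = 0 → f = 0 := by
      intro f hf
      have hcoef := Fintype.linearIndependent_iff.mp hli
        (fun i : Fin r => f i * ∏ j ∈ Finset.range (i : ℕ), ((σ⁻¹ : L ≃ₐ[K] L) ^ j) (μ : L))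
      have hzero : (∑ i : Fin r,
          (f i * ∏ j ∈ Finset.range (i : ℕ), ((σ⁻¹ : L ≃ₐ[K] L) ^ j) (μ : L)) •
            (⇑((σ⁻¹ : L ≃ₐ[K] L) ^ (i : ℕ)) : L → L)) = 0 := by
        funext y
        have h1 := congrArg (fun (F : Module.End K L) => F y) hf
        simp only [LinearMap.zero_apply] at h1
        rw [LinearMap.sum_apply] at h1
        rw [Finset.sum_apply, Pi.zero_apply]
        rw [← h1]
        refine Finset.sum_congr rfl fun i _ => ?_
        rw [Pi.smul_apply, Module.End.mul_apply, hTn, hlm, smul_eq_mul]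
        ring
      have hcoefs := hcoef hzero
      funext i
      have h2 := hcoefs i
      have h3 : (∏ j ∈ Finset.range (i : ℕ), ((σ⁻¹ : L ≃ₐ[K] L) ^ j) (μ : L)) ≠ 0 := by
        refine Finset.prod_ne_zero_iff.mpr fun j _ => ?_
        intro h4
        exact Units.ne_zero μ (((σ⁻¹ : L ≃ₐ[K] L) ^ j).injective (h4.trans (map_zero _).symm))
      exact (mul_eq_zero.mp h2).resolve_right h3
    have hφinj : Function.Injective φA := by
      refine (injective_iff_map_eq_zero φA).mpr ?_
      intro x hx
      obtain ⟨f, rfl⟩ : ∃ f, G f = x := ⟨G.symm x, G.apply_symm_apply x⟩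
      have h1 : φ (G f) = ∑ i : Fin r, lm (f i) * T ^ (i : ℕ) := by rw [hGf f, hφB f]
      have h2 : (∑ i : Fin r, lm (f i) * T ^ (i : ℕ)) = 0 := by
        rw [← h1]; exact hx
      have h3 := hρinj f h2
      rw [h3, map_zero]
    have hφsurj : Function.Surjective φA := by
      have hEnd : finrank K (Module.End K L) = r * r := by
        rw [Module.finrank_linearMap, hr]
      have hrk : finrank K A = finrank K (Module.End K L) := by rw [hfinA, hEnd]
      exact (LinearMap.injective_iff_surjective_of_finrank_eq_finrank (f := φ) hrk).mp hφinj
    let Φ : A ≃ₐ[K] Module.End K L := AlgEquiv.ofBijective φA ⟨hφinj, hφsurj⟩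
    exact ⟨Φ.trans (algEquivMatrix (Module.finBasisOfFinrankEq K L hr))⟩
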